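/- Let M, N : I² → I be means with M ≤ N satisfying |M(x,y)−N(x,y)| < |x−y| for x ≠ y, Tr the transfinite invariant mean, and Φ : I² → ℝ a continuous function satisfying Φ(x,y) = Φ(M(x,y),N(x,y)) for all x,y. If the map x ↦ Φ(x,x) is injective, then Tr is continuous. -/

import Mathlib

open Ordinal

def IsMean (I : Set ℝ) (M : ℝ → ℝ → ℝ) : Prop :=
  ∀ x ∈ I, ∀ y ∈ I, M x y ∈ I ∧ min x y ≤ M x y ∧ M x y ≤ max x y

/-- The transfinite orbit of `(x,y)` under `(M,N)`: `x₀ = x`, `y₀ = y`,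
`x_{α+1} = M(x_α, y_α)`, `y_{α+1} = N(x_α, y_α)`, and at limit ordinals
`x_α = lim_{β↗α} x_β = sup_{1 ≤ β < α} x_β`, `y_α = lim_{β↗α} y_β = inf_{1 ≤ β < α} y_β`
(for `M ≤ N` the sequences are monotone from index `1` on, so these limits are the
suprema/infima of the tails). -/
noncomputable def tOrbit (M N : ℝ → ℝ → ℝ) (x y : ℝ) (o : Ordinal.{0}) : ℝ × ℝ :=
  Ordinal.limitRecOn o (x, y)
    (fun _ p => (M p.1 p.2, N p.1 p.2))
    (fun α _ ih =>
      (sSup {t : ℝ | ∃ β : Ordinal, ∃ h : β < α, 1 ≤ β ∧ (ih β h).1 = t},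
       sInf {t : ℝ | ∃ β : Ordinal, ∃ h : β < α, 1 ≤ β ∧ (ih β h).2 = t}))


/-- The transfinite invariant mean `Tr(x,y) := x_{ω₁} (= y_{ω₁})`. -/
noncomputable def Tr (M N : ℝ → ℝ → ℝ) (x y : ℝ) : ℝ :=
  (tOrbit M N x y ω₁).1

lemma tOrbit_zero (M N : ℝ → ℝ → ℝ) (x y : ℝ) : tOrbit M N x y 0 = (x, y) :=
  Ordinal.limitRecOn_zero _ _ _

lemma tOrbit_succ (M N : ℝ → ℝ → ℝ) (x y : ℝ) (o : Ordinal) :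
    tOrbit M N x y (Order.succ o) =
      (M (tOrbit M N x y o).1 (tOrbit M N x y o).2,
       N (tOrbit M N x y o).1 (tOrbit M N x y o).2) :=
  Ordinal.limitRecOn_succ _ _ _ _

lemma tOrbit_limit (M N : ℝ → ℝ → ℝ) (x y : ℝ) (o : Ordinal) (h : Order.IsSuccLimit o) :
    tOrbit M N x y o =
      (sSup {t : ℝ | ∃ β : Ordinal, ∃ _ : β < o, 1 ≤ β ∧ (tOrbit M N x y β).1 = t},
       sInf {t : ℝ | ∃ β : Ordinal, ∃ _ : β < o, 1 ≤ β ∧ (tOrbit M N x y β).2 = t}) := by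
  rw [tOrbit, Ordinal.limitRecOn_limit _ _ _ _ h]
  simp only [tOrbit]

section Good

variable {I : Set ℝ} {M N Φ : ℝ → ℝ → ℝ} {x y : ℝ}

lemma mem_of_bounds (hI : I.OrdConnected) (hx : x ∈ I) (hy : y ∈ I) {t : ℝ}
    (h1 : min x y ≤ t) (h2 : t ≤ max x y) : t ∈ I := by
  have hmin : min x y ∈ I := by rcases min_choice x y with h | h <;> rw [h] <;> assumption
  have hmax : max x y ∈ I := by rcases max_choice x y with h | h <;> rw [h] <;> assumption
  exact hI.out hmin hmax ⟨h1, h2⟩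

lemma good (hI : I.OrdConnected) (hM : IsMean I M) (hN : IsMean I N)
    (hMN : ∀ x ∈ I, ∀ y ∈ I, M x y ≤ N x y)
    (hΦ : ContinuousOn (fun p : ℝ × ℝ => Φ p.1 p.2) (I ×ˢ I))
    (hΦinv : ∀ x ∈ I, ∀ y ∈ I, Φ x y = Φ (M x y) (N x y))
    (hx : x ∈ I) (hy : y ∈ I) (α : Ordinal.{0}) :
    ((min x y ≤ (tOrbit M N x y α).1 ∧ (tOrbit M N x y α).1 ≤ max x y) ∧
     (min x y ≤ (tOrbit M N x y α).2 ∧ (tOrbit M N x y α).2 ≤ max x y)) ∧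
    (1 ≤ α → (tOrbit M N x y α).1 ≤ (tOrbit M N x y α).2) ∧
    (∀ β, 1 ≤ β → β < α →
      (tOrbit M N x y β).1 ≤ (tOrbit M N x y α).1 ∧
      (tOrbit M N x y α).2 ≤ (tOrbit M N x y β).2) ∧
    Φ (tOrbit M N x y α).1 (tOrbit M N x y α).2 = Φ x y := by
  induction α using Ordinal.limitRecOn with
  | zero =>
    rw [tOrbit_zero]
    refine ⟨⟨⟨min_le_left x y, le_max_left x y⟩, ⟨min_le_right x y, le_max_right x y⟩⟩,
      ?_, ?_, rfl⟩
    · intro h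
      exact absurd h (by simp)
    · intro β h1 h2
      exact absurd h2 (by simp)
  | add_one α ih =>
    rw [Ordinal.add_one_eq_succ]
    obtain ⟨⟨⟨hxm, hxM⟩, ⟨hym, hyM⟩⟩, hXY, hmono, hΦα⟩ := ih
    set a := (tOrbit M N x y α).1 with ha
    set b := (tOrbit M N x y α).2 with hb
    have haI : a ∈ I := mem_of_bounds hI hx hy hxm hxM
    have hbI : b ∈ I := mem_of_bounds hI hx hy hym hyM
    have hMb := hM a haI b hbI
    have hNb := hN a haI b hbI
    simp only [tOrbit_succ, ← ha, ← hb]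
    have hminab : min x y ≤ min a b := le_min hxm hym
    have hmaxab : max a b ≤ max x y := max_le hxM hyM
    refine ⟨⟨⟨le_trans hminab hMb.2.1, le_trans hMb.2.2 hmaxab⟩,
      ⟨le_trans hminab hNb.2.1, le_trans hNb.2.2 hmaxab⟩⟩, ?_, ?_, ?_⟩
    · intro _
      exact hMN a haI b hbI
    · intro β h1 h2
      have hβα : β ≤ α := Order.lt_succ_iff.mp h2
      have h1α : 1 ≤ α := le_trans h1 hβα
      have hab : a ≤ b := hXY h1α
      have hstep1 : a ≤ M a b := by
        have := hMb.2.1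
        rwa [min_eq_left hab] at this
      have hstep2 : N a b ≤ b := by
        have := hNb.2.2
        rwa [max_eq_right hab] at this
      rcases eq_or_lt_of_le hβα with rfl | hlt
      · exact ⟨hstep1, hstep2⟩
      · obtain ⟨hm1, hm2⟩ := hmono β h1 hlt
        exact ⟨le_trans hm1 hstep1, le_trans hstep2 hm2⟩
    · rw [← hΦinv a haI b hbI]
      exact hΦα
  | limit α hα ih =>
    have hrw := tOrbit_limit M N x y α hα
    set Sx := {t : ℝ | ∃ β : Ordinal, ∃ _ : β < α, 1 ≤ β ∧ (tOrbit M N x y β).1 = t} with hSxdef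
    set Sy := {t : ℝ | ∃ β : Ordinal, ∃ _ : β < α, 1 ≤ β ∧ (tOrbit M N x y β).2 = t} with hSydef
    have hXα : (tOrbit M N x y α).1 = sSup Sx := by rw [hrw]
    have hYα : (tOrbit M N x y α).2 = sInf Sy := by rw [hrw]
    have h1α : (1 : Ordinal) < α := by
      have := hα.succ_lt hα.pos
      rwa [Ordinal.succ_zero] at this
    have hmemx : ∀ β, 1 ≤ β → β < α → (tOrbit M N x y β).1 ∈ Sx :=
      fun β h1 h2 => ⟨β, h2, h1, rfl⟩
    have hmemy : ∀ β, 1 ≤ β → β < α → (tOrbit M N x y β).2 ∈ Sy :=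
      fun β h1 h2 => ⟨β, h2, h1, rfl⟩
    have hneX : Sx.Nonempty := ⟨_, hmemx 1 le_rfl h1α⟩
    have hneY : Sy.Nonempty := ⟨_, hmemy 1 le_rfl h1α⟩
    have hbddX : BddAbove Sx := ⟨max x y, by rintro t ⟨β, hβ, h1, rfl⟩; exact (ih β hβ).1.1.2⟩
    have hbddY : BddBelow Sy := ⟨min x y, by rintro t ⟨β, hβ, h1, rfl⟩; exact (ih β hβ).1.2.1⟩
    have hmonole : ∀ β γ : Ordinal, 1 ≤ β → β ≤ γ → γ < α →
        (tOrbit M N x y β).1 ≤ (tOrbit M N x y γ).1 ∧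
        (tOrbit M N x y γ).2 ≤ (tOrbit M N x y β).2 := by
      intro β γ hβ1 hβγ hγα
      rcases eq_or_lt_of_le hβγ with rfl | h
      · exact ⟨le_rfl, le_rfl⟩
      · exact (ih γ hγα).2.2.1 β hβ1 h
    have hcross : ∀ β, 1 ≤ β → β < α → ∀ γ, 1 ≤ γ → γ < α →
        (tOrbit M N x y β).1 ≤ (tOrbit M N x y γ).2 := by
      intro β hβ1 hβα γ hγ1 hγα
      have hδα : max β γ < α := max_lt hβα hγα
      have hδ1 : (1 : Ordinal) ≤ max β γ := le_trans hβ1 (le_max_left β γ)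
      calc (tOrbit M N x y β).1 ≤ (tOrbit M N x y (max β γ)).1 :=
            (hmonole β (max β γ) hβ1 (le_max_left β γ) hδα).1
        _ ≤ (tOrbit M N x y (max β γ)).2 := (ih _ hδα).2.1 hδ1
        _ ≤ (tOrbit M N x y γ).2 := (hmonole γ (max β γ) hγ1 (le_max_right β γ) hδα).2
    have hbX : min x y ≤ (tOrbit M N x y α).1 ∧ (tOrbit M N x y α).1 ≤ max x y := by
      rw [hXα]
      exact ⟨le_trans (ih 1 h1α).1.1.1 (le_csSup hbddX (hmemx 1 le_rfl h1α)),
        csSup_le hneX (by rintro t ⟨β, hβ, h1, rfl⟩; exact (ih β hβ).1.1.2)⟩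
    have hbY : min x y ≤ (tOrbit M N x y α).2 ∧ (tOrbit M N x y α).2 ≤ max x y := by
      rw [hYα]
      exact ⟨le_csInf hneY (by rintro t ⟨β, hβ, h1, rfl⟩; exact (ih β hβ).1.2.1),
        le_trans (csInf_le hbddY (hmemy 1 le_rfl h1α)) (ih 1 h1α).1.2.2⟩
    have hXYα : (tOrbit M N x y α).1 ≤ (tOrbit M N x y α).2 := by
      rw [hXα, hYα]
      apply csSup_le hneX
      rintro t ⟨β, hβ, h1, rfl⟩
      apply le_csInf hneY
      rintro s ⟨γ, hγ, h1', rfl⟩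
      exact hcross β h1 hβ γ h1' hγ
    have hmonoα : ∀ β, 1 ≤ β → β < α →
        (tOrbit M N x y β).1 ≤ (tOrbit M N x y α).1 ∧
        (tOrbit M N x y α).2 ≤ (tOrbit M N x y β).2 := by
      intro β h1 h2
      rw [hXα, hYα]
      exact ⟨le_csSup hbddX (hmemx β h1 h2), csInf_le hbddY (hmemy β h1 h2)⟩
    refine ⟨⟨hbX, hbY⟩, fun _ => hXYα, hmonoα, ?_⟩
    -- the Φ-invariance at the limit stage
    have hpairI : ((tOrbit M N x y α).1, (tOrbit M N x y α).2) ∈ I ×ˢ I :=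
      ⟨mem_of_bounds hI hx hy hbX.1 hbX.2, mem_of_bounds hI hx hy hbY.1 hbY.2⟩
    have hc := Metric.continuousWithinAt_iff.mp (hΦ _ hpairI)
    apply eq_of_forall_dist_le
    intro ε hε
    obtain ⟨δ, hδ, hcont⟩ := hc ε hε
    obtain ⟨tx, htxm, htx⟩ :=
      exists_lt_of_lt_csSup hneX (by linarith : sSup Sx - δ < sSup Sx)
    obtain ⟨β, hβα, hβ1, rfl⟩ := htxm
    obtain ⟨ty, htym, hty⟩ :=
      exists_lt_of_csInf_lt hneY (by linarith : sInf Sy < sInf Sy + δ)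
    obtain ⟨γ, hγα, hγ1, rfl⟩ := htym
    set ζ := max β γ with hζdef
    have hζα : ζ < α := max_lt hβα hγα
    have hζ1 : (1 : Ordinal) ≤ ζ := le_trans hβ1 (le_max_left β γ)
    have hXζ1 : sSup Sx - δ < (tOrbit M N x y ζ).1 :=
      lt_of_lt_of_le htx (hmonole β ζ hβ1 (le_max_left β γ) hζα).1
    have hXζ2 : (tOrbit M N x y ζ).1 ≤ sSup Sx := le_csSup hbddX (hmemx ζ hζ1 hζα)
    have hYζ1 : (tOrbit M N x y ζ).2 < sInf Sy + δ :=
      lt_of_le_of_lt (hmonole γ ζ hγ1 (le_max_right β γ) hζα).2 hty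
    have hYζ2 : sInf Sy ≤ (tOrbit M N x y ζ).2 := csInf_le hbddY (hmemy ζ hζ1 hζα)
    have hdist : dist (((tOrbit M N x y ζ).1, (tOrbit M N x y ζ).2) : ℝ × ℝ)
        ((tOrbit M N x y α).1, (tOrbit M N x y α).2) < δ := by
      rw [Prod.dist_eq]
      apply max_lt
      · rw [hXα, Real.dist_eq, abs_lt]
        constructor <;> linarith
      · rw [hYα, Real.dist_eq, abs_lt]
        constructor <;> linarith
    have hζI : ((tOrbit M N x y ζ).1, (tOrbit M N x y ζ).2) ∈ I ×ˢ I :=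
      ⟨mem_of_bounds hI hx hy (ih ζ hζα).1.1.1 (ih ζ hζα).1.1.2,
       mem_of_bounds hI hx hy (ih ζ hζα).1.2.1 (ih ζ hζα).1.2.2⟩
    have := hcont hζI hdist
    rw [show Φ ((tOrbit M N x y ζ).1, (tOrbit M N x y ζ).2).1
          ((tOrbit M N x y ζ).1, (tOrbit M N x y ζ).2).2 = Φ x y from (ih ζ hζα).2.2.2] at this
    rw [dist_comm] at this
    exact this.le

end Good

section Fix

variable {I : Set ℝ} {M N Φ : ℝ → ℝ → ℝ} {x y : ℝ}

lemma tr_fix (hI : I.OrdConnected) (hM : IsMean I M) (hN : IsMean I N)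
    (hMN : ∀ x ∈ I, ∀ y ∈ I, M x y ≤ N x y)
    (hcontr : ∀ x ∈ I, ∀ y ∈ I, x ≠ y → |M x y - N x y| < |x - y|)
    (hΦ : ContinuousOn (fun p : ℝ × ℝ => Φ p.1 p.2) (I ×ˢ I))
    (hΦinv : ∀ x ∈ I, ∀ y ∈ I, Φ x y = Φ (M x y) (N x y))
    (hx : x ∈ I) (hy : y ∈ I) :
    (tOrbit M N x y ω₁).1 = (tOrbit M N x y ω₁).2 := by
  have hgood := fun α => good hI hM hN hMN hΦ hΦinv hx hy (α : Ordinal.{0})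
  have hlim : Order.IsSuccLimit (ω₁ : Ordinal.{0}) := Cardinal.isSuccLimit_omega 1
  have hrw := tOrbit_limit M N x y ω₁ hlim
  set Sx := {t : ℝ | ∃ β : Ordinal, ∃ _ : β < (ω₁ : Ordinal.{0}), 1 ≤ β ∧ (tOrbit M N x y β).1 = t} with hSxdef
  set Sy := {t : ℝ | ∃ β : Ordinal, ∃ _ : β < (ω₁ : Ordinal.{0}), 1 ≤ β ∧ (tOrbit M N x y β).2 = t} with hSydef
  have hXα : (tOrbit M N x y ω₁).1 = sSup Sx := by rw [hrw]
  have hYα : (tOrbit M N x y ω₁).2 = sInf Sy := by rw [hrw]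
  have h1α : (1 : Ordinal) < ω₁ := by
    have := hlim.succ_lt hlim.pos
    rwa [Ordinal.succ_zero] at this
  have hmemx : ∀ β, 1 ≤ β → β < (ω₁ : Ordinal.{0}) → (tOrbit M N x y β).1 ∈ Sx :=
    fun β h1 h2 => ⟨β, h2, h1, rfl⟩
  have hmemy : ∀ β, 1 ≤ β → β < (ω₁ : Ordinal.{0}) → (tOrbit M N x y β).2 ∈ Sy :=
    fun β h1 h2 => ⟨β, h2, h1, rfl⟩
  have hneX : Sx.Nonempty := ⟨_, hmemx 1 le_rfl h1α⟩
  have hneY : Sy.Nonempty := ⟨_, hmemy 1 le_rfl h1α⟩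
  have hbddX : BddAbove Sx := ⟨max x y, by rintro t ⟨β, hβ, h1, rfl⟩; exact (hgood β).1.1.2⟩
  have hbddY : BddBelow Sy := ⟨min x y, by rintro t ⟨β, hβ, h1, rfl⟩; exact (hgood β).1.2.1⟩
  have hmonole : ∀ β γ : Ordinal, 1 ≤ β → β ≤ γ →
      (tOrbit M N x y β).1 ≤ (tOrbit M N x y γ).1 ∧
      (tOrbit M N x y γ).2 ≤ (tOrbit M N x y β).2 := by
    intro β γ hβ1 hβγ
    rcases eq_or_lt_of_le hβγ with rfl | h
    · exact ⟨le_rfl, le_rfl⟩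
    · exact (hgood γ).2.2.1 β hβ1 h
  rw [hXα, hYα]
  by_contra hne
  have hst : sSup Sx < sInf Sy := by
    rcases lt_or_eq_of_le (hXα ▸ hYα ▸ (hgood ω₁).2.1 h1α.le) with h | h
    · exact h
    · exact absurd h hne
  -- for each n pick an index where both sequences are within 1/(n+1)
  have hex : ∀ n : ℕ, ∃ β : Ordinal, (β < (ω₁ : Ordinal.{0}) ∧ 1 ≤ β) ∧
      sSup Sx - 1 / (n + 1) < (tOrbit M N x y β).1 ∧
      (tOrbit M N x y β).2 < sInf Sy + 1 / (n + 1) := by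
    intro n
    have hpos : (0 : ℝ) < 1 / (n + 1) := by positivity
    obtain ⟨tx, htxm, htx⟩ :=
      exists_lt_of_lt_csSup hneX (by linarith : sSup Sx - 1 / (n + 1) < sSup Sx)
    obtain ⟨β, hβα, hβ1, rfl⟩ := htxm
    obtain ⟨ty, htym, hty⟩ :=
      exists_lt_of_csInf_lt hneY (by linarith : sInf Sy < sInf Sy + 1 / (n + 1))
    obtain ⟨γ, hγα, hγ1, rfl⟩ := htym
    refine ⟨max β γ, ⟨max_lt hβα hγα, le_trans hβ1 (le_max_left β γ)⟩, ?_, ?_⟩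
    · exact lt_of_lt_of_le htx (hmonole β (max β γ) hβ1 (le_max_left β γ)).1
    · exact lt_of_le_of_lt (hmonole γ (max β γ) hγ1 (le_max_right β γ)).2 hty
  choose f hf1 hf2 using hex
  set δ := ⨆ n, f n with hδdef
  have hδω : δ < (ω₁ : Ordinal.{0}) := by
    exact Ordinal.iSup_lt_omega_one (fun n => (hf1 n).1)
  have hδ1 : (1 : Ordinal) ≤ δ := le_trans (hf1 0).2 (Ordinal.le_iSup f 0)
  have hfδ : ∀ n, f n ≤ δ := fun n => Ordinal.le_iSup f n
  have hXδ : (tOrbit M N x y δ).1 = sSup Sx := by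
    apply le_antisymm (le_csSup hbddX (hmemx δ hδ1 hδω))
    by_contra h
    push_neg at h
    obtain ⟨n, hn⟩ := exists_nat_one_div_lt (by linarith : (0:ℝ) < sSup Sx - (tOrbit M N x y δ).1)
    have h1 := (hf2 n).1
    have h2 := (hmonole (f n) δ (hf1 n).2 (hfδ n)).1
    have : (1 : ℝ) / (n + 1) < sSup Sx - (tOrbit M N x y δ).1 := hn
    linarith
  have hYδ : (tOrbit M N x y δ).2 = sInf Sy := by
    apply le_antisymm _ (csInf_le hbddY (hmemy δ hδ1 hδω))
    by_contra h
    push_neg at h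
    obtain ⟨n, hn⟩ := exists_nat_one_div_lt (by linarith : (0:ℝ) < (tOrbit M N x y δ).2 - sInf Sy)
    have h1 := (hf2 n).2
    have h2 := (hmonole (f n) δ (hf1 n).2 (hfδ n)).2
    have : (1 : ℝ) / (n + 1) < (tOrbit M N x y δ).2 - sInf Sy := hn
    linarith
  -- contraction step at δ + 1
  have hsI : sSup Sx ∈ I := by
    rw [← hXδ]
    exact mem_of_bounds hI hx hy (hgood δ).1.1.1 (hgood δ).1.1.2
  have htI : sInf Sy ∈ I := by
    rw [← hYδ]
    exact mem_of_bounds hI hx hy (hgood δ).1.2.1 (hgood δ).1.2.2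
  have hsuccrw := tOrbit_succ M N x y δ
  have hX1 : (tOrbit M N x y (Order.succ δ)).1 = M (sSup Sx) (sInf Sy) := by
    rw [hsuccrw, hXδ, hYδ]
  have hY1 : (tOrbit M N x y (Order.succ δ)).2 = N (sSup Sx) (sInf Sy) := by
    rw [hsuccrw, hXδ, hYδ]
  have hsucclt : Order.succ δ < (ω₁ : Ordinal.{0}) := hlim.succ_lt hδω
  have hsucc1 : (1 : Ordinal) ≤ Order.succ δ := le_trans hδ1 (Order.le_succ δ)
  have hMle : M (sSup Sx) (sInf Sy) ≤ sSup Sx := by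
    rw [← hX1]
    exact le_csSup hbddX (hmemx _ hsucc1 hsucclt)
  have hMge : sSup Sx ≤ M (sSup Sx) (sInf Sy) := by
    have := (hmonole δ (Order.succ δ) hδ1 (Order.le_succ δ)).1
    rwa [hXδ, hX1] at this
  have hNge : sInf Sy ≤ N (sSup Sx) (sInf Sy) := by
    rw [← hY1]
    exact csInf_le hbddY (hmemy _ hsucc1 hsucclt)
  have hNle : N (sSup Sx) (sInf Sy) ≤ sInf Sy := by
    have := (hmonole δ (Order.succ δ) hδ1 (Order.le_succ δ)).2
    rwa [hYδ, hY1] at this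
  have hc := hcontr _ hsI _ htI (ne_of_lt hst)
  rw [le_antisymm hMle hMge, le_antisymm hNle hNge] at hc
  exact lt_irrefl _ hc

end Fix

section Spec

variable {I : Set ℝ} {M N Φ : ℝ → ℝ → ℝ} {x y : ℝ}

lemma tr_spec (hI : I.OrdConnected) (hM : IsMean I M) (hN : IsMean I N)
    (hMN : ∀ x ∈ I, ∀ y ∈ I, M x y ≤ N x y)
    (hcontr : ∀ x ∈ I, ∀ y ∈ I, x ≠ y → |M x y - N x y| < |x - y|)
    (hΦ : ContinuousOn (fun p : ℝ × ℝ => Φ p.1 p.2) (I ×ˢ I))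
    (hΦinv : ∀ x ∈ I, ∀ y ∈ I, Φ x y = Φ (M x y) (N x y))
    (hx : x ∈ I) (hy : y ∈ I) :
    Tr M N x y ∈ I ∧ min x y ≤ Tr M N x y ∧ Tr M N x y ≤ max x y ∧
      Φ (Tr M N x y) (Tr M N x y) = Φ x y := by
  have hg := good hI hM hN hMN hΦ hΦinv hx hy ω₁
  have hfix := tr_fix hI hM hN hMN hcontr hΦ hΦinv hx hy
  refine ⟨mem_of_bounds hI hx hy hg.1.1.1 hg.1.1.2, hg.1.1.1, hg.1.1.2, ?_⟩
  have hΦeq := hg.2.2.2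
  rw [← hfix] at hΦeq
  exact hΦeq

end Spec


theorem stmt18 (I : Set ℝ) (hI : I.OrdConnected) (M N : ℝ → ℝ → ℝ)
    (hM : IsMean I M) (hN : IsMean I N)
    (hMN : ∀ x ∈ I, ∀ y ∈ I, M x y ≤ N x y)
    (hcontr : ∀ x ∈ I, ∀ y ∈ I, x ≠ y → |M x y - N x y| < |x - y|)
    (Φ : ℝ → ℝ → ℝ) (hΦ : ContinuousOn (fun p : ℝ × ℝ => Φ p.1 p.2) (I ×ˢ I))
    (hΦinv : ∀ x ∈ I, ∀ y ∈ I, Φ x y = Φ (M x y) (N x y))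
    (hinj : Set.InjOn (fun t => Φ t t) I) :
    ContinuousOn (fun p : ℝ × ℝ => Tr M N p.1 p.2) (I ×ˢ I) := by
  have hspec : ∀ p : ℝ × ℝ, p ∈ I ×ˢ I →
      Tr M N p.1 p.2 ∈ I ∧ min p.1 p.2 ≤ Tr M N p.1 p.2 ∧ Tr M N p.1 p.2 ≤ max p.1 p.2 ∧
        Φ (Tr M N p.1 p.2) (Tr M N p.1 p.2) = Φ p.1 p.2 :=
    fun p hp => tr_spec hI hM hN hMN hcontr hΦ hΦinv hp.1 hp.2
  intro p₀ hp₀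
  have hx₀ := hp₀.1
  have hy₀ := hp₀.2
  set T₀ := Tr M N p₀.1 p₀.2 with hT₀
  by_contra hcon
  rw [ContinuousWithinAt, Metric.tendsto_nhds] at hcon
  push_neg at hcon
  obtain ⟨ε, hε, hfreq⟩ := hcon
  obtain ⟨u, hu, hud⟩ := Filter.exists_seq_forall_of_frequently hfreq
  rw [tendsto_nhdsWithin_iff] at hu
  obtain ⟨hu1, hu2⟩ := hu
  have hdist1 : ∀ᶠ n in Filter.atTop, dist (u n) p₀ < 1 :=
    hu1 (Metric.ball_mem_nhds p₀ one_pos)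
  obtain ⟨N₀, hN₀⟩ := Filter.eventually_atTop.mp (hu2.and hdist1)
  set w : ℕ → ℝ × ℝ := fun n => u (n + N₀) with hwdef
  have hw : ∀ n, w n ∈ I ×ˢ I ∧ dist (w n) p₀ < 1 := fun n => hN₀ (n + N₀) (Nat.le_add_left _ _)
  have hwt : Filter.Tendsto w Filter.atTop (nhds p₀) :=
    hu1.comp (Filter.tendsto_add_atTop_nat N₀)
  set v : ℕ → ℝ := fun n => Tr M N (w n).1 (w n).2 with hvdef
  have hvmem : ∀ n, v n ∈ Set.Icc (min p₀.1 p₀.2 - 1) (max p₀.1 p₀.2 + 1) := by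
    intro n
    obtain ⟨hmem, hd⟩ := hw n
    have hs := hspec _ hmem
    have h1 : dist (w n).1 p₀.1 < 1 :=
      lt_of_le_of_lt (by rw [Prod.dist_eq]; exact le_max_left _ _) hd
    have h2 : dist (w n).2 p₀.2 < 1 :=
      lt_of_le_of_lt (by rw [Prod.dist_eq]; exact le_max_right _ _) hd
    rw [Real.dist_eq, abs_lt] at h1 h2
    constructor
    · have ha : min p₀.1 p₀.2 - 1 ≤ (w n).1 := by
        have := min_le_left p₀.1 p₀.2; linarith [h1.1]
      have hb : min p₀.1 p₀.2 - 1 ≤ (w n).2 := by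
        have := min_le_right p₀.1 p₀.2; linarith [h2.1]
      exact le_trans (le_min ha hb) hs.2.1
    · have ha : (w n).1 ≤ max p₀.1 p₀.2 + 1 := by
        have := le_max_left p₀.1 p₀.2; linarith [h1.2]
      have hb : (w n).2 ≤ max p₀.1 p₀.2 + 1 := by
        have := le_max_right p₀.1 p₀.2; linarith [h2.2]
      exact le_trans hs.2.2.1 (max_le ha hb)
  obtain ⟨L, _, φ, hφ, hvφ⟩ := (isCompact_Icc).tendsto_subseq hvmem
  have hwφ : Filter.Tendsto (fun n => w (φ n)) Filter.atTop (nhds p₀) :=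
    hwt.comp hφ.tendsto_atTop
  have hwφ1 : Filter.Tendsto (fun n => (w (φ n)).1) Filter.atTop (nhds p₀.1) :=
    (continuous_fst.tendsto p₀).comp hwφ
  have hwφ2 : Filter.Tendsto (fun n => (w (φ n)).2) Filter.atTop (nhds p₀.2) :=
    (continuous_snd.tendsto p₀).comp hwφ
  have hwin : ∀ n, w (φ n) ∈ I ×ˢ I := fun n => (hw (φ n)).1
  have hL1 : min p₀.1 p₀.2 ≤ L :=
    le_of_tendsto_of_tendsto' (hwφ1.min hwφ2) hvφ
      (fun n => (hspec _ (hwin n)).2.1)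
  have hL2 : L ≤ max p₀.1 p₀.2 :=
    le_of_tendsto_of_tendsto' hvφ (hwφ1.max hwφ2)
      (fun n => (hspec _ (hwin n)).2.2.1)
  have hLI : L ∈ I := mem_of_bounds hI hx₀ hy₀ hL1 hL2
  have hval : ∀ n, Φ (v (φ n)) (v (φ n)) = Φ (w (φ n)).1 (w (φ n)).2 :=
    fun n => (hspec _ (hwin n)).2.2.2
  have hwφs : Filter.Tendsto (fun n => w (φ n)) Filter.atTop (nhdsWithin p₀ (I ×ˢ I)) :=
    tendsto_nhdsWithin_iff.mpr ⟨hwφ, Filter.Eventually.of_forall hwin⟩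
  have hR : Filter.Tendsto (fun n => Φ (w (φ n)).1 (w (φ n)).2) Filter.atTop
      (nhds (Φ p₀.1 p₀.2)) := (hΦ p₀ hp₀).tendsto.comp hwφs
  have hLpair : Filter.Tendsto (fun n => ((v (φ n), v (φ n)) : ℝ × ℝ)) Filter.atTop
      (nhdsWithin (L, L) (I ×ˢ I)) :=
    tendsto_nhdsWithin_iff.mpr ⟨hvφ.prodMk_nhds hvφ,
      Filter.Eventually.of_forall fun n => ⟨(hspec _ (hwin n)).1, (hspec _ (hwin n)).1⟩⟩
  have hLt : Filter.Tendsto (fun n => Φ (v (φ n)) (v (φ n))) Filter.atTop (nhds (Φ L L)) :=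
    (hΦ (L, L) ⟨hLI, hLI⟩).tendsto.comp hLpair
  have hΦLL : Φ L L = Φ p₀.1 p₀.2 :=
    tendsto_nhds_unique hLt (hR.congr fun n => (hval n).symm)
  have hΦT : Φ T₀ T₀ = Φ p₀.1 p₀.2 := (hspec p₀ hp₀).2.2.2
  have hLT : L = T₀ := hinj hLI (hspec p₀ hp₀).1 (by simpa using hΦLL.trans hΦT.symm)
  have hdist0 : Filter.Tendsto (fun n => dist (v (φ n)) T₀) Filter.atTop (nhds 0) := by
    have := hvφ.dist (tendsto_const_nhds (x := T₀) (f := Filter.atTop (α := ℕ)))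
    rwa [hLT, dist_self] at this
  have hge : ε ≤ 0 :=
    le_of_tendsto_of_tendsto' tendsto_const_nhds hdist0
      (fun n => (hud (φ n + N₀)))
  linarith
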